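/- Let φ be a traceless symmetric n×n real matrix (n ≥ 2). Then the trace of φ³ satisfies -((n-2)/√(n(n-1)))·|φ|³ ≤ tr(φ³) ≤ ((n-2)/√(n(n-1)))·|φ|³, where |φ| is the Frobenius norm of φ. -/

import Mathlib

open Finset in
lemma okumura_scalar (n : ℕ) (hn : 2 ≤ n) (a : Fin n → ℝ) (h1 : ∑ i, a i = 0) :
    ∑ i, (a i)^3 ≤ ((n : ℝ) - 2) / Real.sqrt (n * (n-1)) * (Real.sqrt (∑ i, (a i)^2))^3 := by
  have hn2 : (2:ℝ) ≤ (n:ℝ) := by exact_mod_cast hn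
  set S : ℝ := ∑ i, (a i)^2 with hSdef
  have hS : 0 ≤ S := Finset.sum_nonneg fun i _ => sq_nonneg _
  set β : ℝ := Real.sqrt S with hβdef
  have hβ0 : 0 ≤ β := Real.sqrt_nonneg _
  have hβ2 : β^2 = S := Real.sq_sqrt hS
  have hnn : (0:ℝ) < (n:ℝ) * ((n:ℝ) - 1) := by nlinarith
  set r : ℝ := Real.sqrt ((n:ℝ) * ((n:ℝ)-1)) with hrdef
  have hr : 0 < r := Real.sqrt_pos.2 hnn
  have hr2 : r^2 = (n:ℝ) * ((n:ℝ)-1) := Real.sq_sqrt hnn.le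
  -- Step A: each r * a i ≤ (n-1) * β
  have stepA : ∀ i, r * a i ≤ ((n:ℝ) - 1) * β := by
    intro i
    have herase : ∑ j ∈ univ.erase i, a j = - a i := by
      have h2 := Finset.add_sum_erase univ a (mem_univ i)
      rw [h1] at h2; linarith
    have herase2 : ∑ j ∈ univ.erase i, (a j)^2 = S - (a i)^2 := by
      have h2 := Finset.add_sum_erase univ (fun j => (a j)^2) (mem_univ i)
      rw [← hSdef] at h2; linarith
    have hcs := sq_sum_le_card_mul_sum_sq (s := univ.erase i) (f := a)
    rw [herase, herase2, Finset.card_erase_of_mem (mem_univ i), Finset.card_univ,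
      Fintype.card_fin] at hcs
    have hcard : ((n - 1 : ℕ) : ℝ) = (n:ℝ) - 1 := by
      have : (1:ℕ) ≤ n := by omega
      push_cast [Nat.cast_sub this]
      ring
    rw [hcard] at hcs
    have hsq : (a i)^2 ≤ (((n:ℝ)-1)/r * β)^2 := by
      have hq : (n:ℝ) * (a i)^2 ≤ ((n:ℝ)-1) * S := by nlinarith
      rw [mul_pow, div_pow, hβ2, hr2, div_mul_eq_mul_div, le_div_iff₀ hnn]
      nlinarith
    have : a i ≤ ((n:ℝ)-1)/r * β := by
      calc a i ≤ |a i| := le_abs_self _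
        _ = Real.sqrt ((a i)^2) := (Real.sqrt_sq_eq_abs _).symm
        _ ≤ Real.sqrt ((((n:ℝ)-1)/r * β)^2) := Real.sqrt_le_sqrt hsq
        _ = ((n:ℝ)-1)/r * β :=
            Real.sqrt_sq (mul_nonneg (div_nonneg (by linarith) hr.le) hβ0)
    calc r * a i ≤ r * (((n:ℝ)-1)/r * β) := by nlinarith
      _ = ((n:ℝ)-1) * β := by field_simp
  -- Step B pointwise cubic bound, summed
  have stepB : ∀ i, r^3 * (a i)^3 ≤ ((n:ℝ)-3) * r^2 * β * (a i)^2
      + (2*(n:ℝ)-3) * r * β^2 * (a i) + ((n:ℝ)-1) * β^3 := by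
    intro i
    have h := stepA i
    nlinarith [mul_nonneg (sub_nonneg.2 h) (sq_nonneg (r * a i + β)), sq_nonneg (r * a i + β)]
  have sumB : r^3 * ∑ i, (a i)^3 ≤ ((n:ℝ)-3) * r^2 * β * S + ((n:ℝ)) * (((n:ℝ)-1) * β^3) := by
    calc r^3 * ∑ i, (a i)^3 = ∑ i, r^3 * (a i)^3 := by rw [Finset.mul_sum]
      _ ≤ ∑ i, (((n:ℝ)-3) * r^2 * β * (a i)^2
            + (2*(n:ℝ)-3) * r * β^2 * (a i) + ((n:ℝ)-1) * β^3) :=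
          Finset.sum_le_sum fun i _ => stepB i
      _ = ((n:ℝ)-3) * r^2 * β * S + (2*(n:ℝ)-3) * r * β^2 * (∑ i, a i)
            + (n:ℝ) * (((n:ℝ)-1) * β^3) := by
          rw [Finset.sum_add_distrib, Finset.sum_add_distrib, ← Finset.mul_sum, ← Finset.mul_sum,
            Finset.sum_const, Finset.card_univ, Fintype.card_fin, nsmul_eq_mul]
      _ = ((n:ℝ)-3) * r^2 * β * S + (n:ℝ) * (((n:ℝ)-1) * β^3) := by rw [h1]; ring
  -- finish
  have hfin : r^3 * ∑ i, (a i)^3 ≤ r^3 * (((n:ℝ)-2)/r * β^3) := by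
    have : r^3 * (((n:ℝ)-2)/r * β^3) = ((n:ℝ)-2) * r^2 * β^3 := by field_simp
    rw [this]
    calc r^3 * ∑ i, (a i)^3 ≤ ((n:ℝ)-3) * r^2 * β * S + (n:ℝ) * (((n:ℝ)-1) * β^3) := sumB
      _ = ((n:ℝ)-2) * r^2 * β^3 := by rw [← hβ2, hr2]; ring
  have := le_of_mul_le_mul_left (by linarith [hfin] : r^3 * ∑ i, (a i)^3 ≤ r^3 * (((n:ℝ)-2)/r * β^3)) (by positivity : (0:ℝ) < r^3)
  calc ∑ i, (a i)^3 ≤ ((n:ℝ)-2)/r * β^3 := this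
    _ = ((n : ℝ) - 2) / Real.sqrt (n * (n-1)) * β^3 := by norm_num [hrdef]


lemma matrix_traces (n : ℕ) (φ : Matrix (Fin n) (Fin n) ℝ) (hsym : φ.IsSymm) :
    ∃ ev : Fin n → ℝ, φ.trace = ∑ i, ev i ∧ (φ * φ).trace = ∑ i, (ev i)^2 ∧
      (φ * φ * φ).trace = ∑ i, (ev i)^3 := by
  have hherm : φ.IsHermitian := by
    rw [Matrix.IsHermitian, Matrix.conjTranspose_eq_transpose_of_trivial]; exact hsym
  set U : Matrix (Fin n) (Fin n) ℝ := (Matrix.IsHermitian.eigenvectorUnitary hherm : Matrix (Fin n) (Fin n) ℝ) with hU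
  set D : Matrix (Fin n) (Fin n) ℝ := Matrix.diagonal hherm.eigenvalues with hD
  have hUU : star U * U = 1 := Unitary.coe_star_mul_self _
  have hspec : φ = U * D * star U := by
    have := hherm.spectral_theorem
    simpa using this
  have key : ∀ X Y : Matrix (Fin n) (Fin n) ℝ,
      (U * X * star U) * (U * Y * star U) = U * (X * Y) * star U := by
    intro X Y
    simp only [Matrix.mul_assoc]
    rw [← Matrix.mul_assoc (star U) U, hUU, Matrix.one_mul]
  have htr : ∀ Z : Matrix (Fin n) (Fin n) ℝ, (U * Z * star U).trace = Z.trace := by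
    intro Z
    rw [Matrix.trace_mul_cycle, hUU, Matrix.one_mul]
  have e2 : φ * φ = U * (D * D) * star U := by
    calc φ * φ = (U * D * star U) * (U * D * star U) := by rw [← hspec]
      _ = U * (D * D) * star U := key D D
  have e3 : φ * φ * φ = U * (D * D * D) * star U := by
    calc φ * φ * φ = (U * (D * D) * star U) * (U * D * star U) := by rw [← hspec, ← e2]
      _ = U * (D * D * D) * star U := key (D * D) D
  refine ⟨hherm.eigenvalues, ?_, ?_, ?_⟩
  · calc φ.trace = (U * D * star U).trace := congrArg Matrix.trace hspec
      _ = D.trace := htr D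
      _ = _ := by rw [hD, Matrix.trace_diagonal]
  · calc (φ * φ).trace = (U * (D * D) * star U).trace := congrArg Matrix.trace e2
      _ = (D * D).trace := htr _
      _ = _ := by
          rw [hD, Matrix.diagonal_mul_diagonal, Matrix.trace_diagonal]
          simp [pow_two]
  · calc (φ * φ * φ).trace = (U * (D * D * D) * star U).trace := congrArg Matrix.trace e3
      _ = (D * D * D).trace := htr _
      _ = _ := by
          rw [hD, Matrix.diagonal_mul_diagonal, Matrix.diagonal_mul_diagonal,
            Matrix.trace_diagonal]
          simp [pow_succ, pow_two, mul_assoc]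

/-- Okumura's inequality: for a traceless symmetric real n×n matrix φ (n ≥ 2),
    -((n-2)/√(n(n-1)))·|φ|³ ≤ tr(φ³) ≤ ((n-2)/√(n(n-1)))·|φ|³,
    where |φ| = √(tr(φ²)) is the Frobenius norm. -/
theorem okumura_inequality (n : ℕ) (hn : 2 ≤ n)
    (φ : Matrix (Fin n) (Fin n) ℝ) (hsym : φ.IsSymm) (htr : φ.trace = 0) :
    -(((n : ℝ) - 2) / Real.sqrt (n * (n - 1))) * (Real.sqrt ((φ * φ).trace)) ^ 3
      ≤ (φ * φ * φ).trace ∧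
    (φ * φ * φ).trace
      ≤ (((n : ℝ) - 2) / Real.sqrt (n * (n - 1))) * (Real.sqrt ((φ * φ).trace)) ^ 3 := by
  obtain ⟨ev, he1, he2, he3⟩ := matrix_traces n φ hsym
  rw [he1] at htr
  rw [he2, he3]
  have hup := okumura_scalar n hn ev htr
  have hlo := okumura_scalar n hn (fun i => -(ev i)) (by simpa using htr)
  constructor
  · have h2 : ∑ i, (-(ev i))^2 = ∑ i, (ev i)^2 := by simp
    have h3 : ∑ i, (-(ev i))^3 = -∑ i, (ev i)^3 := by
      rw [← Finset.sum_neg_distrib]; congr 1; ext i; ring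
    rw [h2, h3] at hlo
    linarith
  · exact hup
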